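/- Every rainbow Ramsey ultrafilter is nowhere dense. That is, let U be a nonprincipal ultrafilter on ℕ such that for every 2-bounded coloring χ : [ℕ]² → ℕ there is A ∈ U polychromatic for χ. Then for every function f : ℕ → ℚ there is A ∈ U such that the image f(A) is nowhere dense in ℚ. -/

import Mathlib

/-- `Y` is polychromatic for the coloring `χ`, given as a function on ordered pairs `a < b`. -/
def Polychromatic (χ : ℕ → ℕ → ℕ) (Y : Set ℕ) : Prop :=
  ∀ a b c d : ℕ, a ∈ Y → b ∈ Y → c ∈ Y → d ∈ Y → a < b → c < d →
    χ a b = χ c d → a = c ∧ b = d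

/-- `χ` is 2-bounded: every color is received by at most two pairs. -/
def TwoBounded (χ : ℕ → ℕ → ℕ) : Prop :=
  ∀ c : ℕ, {p : ℕ × ℕ | p.1 < p.2 ∧ χ p.1 p.2 = c}.encard ≤ 2

open Set

namespace RNwd


/-- Decoder: from a number `j`, try to produce a pair of naturals avoiding `W`. -/
def E (W : Finset ℕ) (j : ℕ) : Option (ℕ × ℕ) :=
  if j.unpair.1 < j.unpair.2.unpair.1 ∧ j.unpair.1 ∉ W ∧ j.unpair.2.unpair.1 ∉ W
  then some (j.unpair.1, j.unpair.2.unpair.1) else none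

abbrev StT := Finset ℕ × ℕ

def step (s : StT) (b : Bool) : StT :=
  if b then (s.1, s.2 + 1)
  else
    match E s.1 s.2 with
    | some xy => (insert xy.1 (insert xy.2 s.1), 0)
    | none => (s.1, 0)

def run : StT → List Bool → StT
  | s, [] => s
  | s, b :: σ => run (step s b) σ

def lab : StT → List Bool → Option (ℕ × ℕ)
  | _, [] => none
  | s, b :: σ => if σ.isEmpty then (if b then none else E s.1 s.2) else lab (step s b) σ

def init : StT := (∅, 0)

lemma E_eq_some {W : Finset ℕ} {j : ℕ} {p : ℕ × ℕ} (h : E W j = some p) :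
    p.1 < p.2 ∧ p.1 ∉ W ∧ p.2 ∉ W := by
  unfold E at h
  split at h
  · rename_i hc
    cases h
    exact hc
  · cases h

lemma step_fst_subset (s : StT) (b : Bool) : s.1 ⊆ (step s b).1 := by
  cases b
  · unfold step
    simp only [Bool.false_eq_true, if_false]
    cases hE : E s.1 s.2 with
    | none => simp
    | some xy =>
        simp only []
        intro x hx
        exact Finset.mem_insert_of_mem (Finset.mem_insert_of_mem hx)
  · unfold step; simp

lemma run_fst_subset (σ : List Bool) : ∀ s : StT, s.1 ⊆ (run s σ).1 := by
  induction σ with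
  | nil => intro s; exact subset_rfl
  | cons b σ ih => intro s; exact (step_fst_subset s b).trans (ih (step s b))

lemma run_append (σ τ : List Bool) : ∀ s : StT, run s (σ ++ τ) = run (run s σ) τ := by
  induction σ with
  | nil => intro s; rfl
  | cons b σ ih => intro s; exact ih (step s b)

lemma lab_singleton (s : StT) (b : Bool) : lab s [b] = if b then none else E s.1 s.2 := by
  simp [lab]

lemma lab_cons (s : StT) (b : Bool) (σ : List Bool) (h : σ ≠ []) :
    lab s (b :: σ) = lab (step s b) σ := by
  cases σ with
  | nil => exact absurd rfl h
  | cons c τ => rfl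

lemma lab_append (σ : List Bool) : ∀ (s : StT) (τ : List Bool), τ ≠ [] →
    lab s (σ ++ τ) = lab (run s σ) τ := by
  induction σ with
  | nil => intro s τ h; rfl
  | cons b σ ih =>
      intro s τ h
      have hne : σ ++ τ ≠ [] := by
        simp [h]
      rw [List.cons_append, lab_cons s b _ hne, ih (step s b) τ h]
      rfl

lemma lab_in (σ : List Bool) : ∀ (s : StT) (p : ℕ × ℕ), lab s σ = some p →
    p.1 ∈ (run s σ).1 ∧ p.2 ∈ (run s σ).1 := by
  induction σ with
  | nil => intro s p h; cases h
  | cons b σ ih =>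
      intro s p h
      cases σ with
      | nil =>
          rw [lab_singleton] at h
          cases b with
          | true => simp at h
          | false =>
              simp only [if_false, Bool.false_eq_true] at h
              have hE := h
              have : run s [false] = step s false := rfl
              rw [this]
              unfold step
              simp only [Bool.false_eq_true, if_false]
              rw [hE]
              constructor
              · exact Finset.mem_insert_self _ _
              · exact Finset.mem_insert_of_mem (Finset.mem_insert_self _ _)
      | cons c τ =>
          rw [lab_cons s b _ (by simp)] at h
          exact ih (step s b) p h

lemma lab_fresh (σ : List Bool) : ∀ (s : StT) (p : ℕ × ℕ), lab s σ = some p →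
    p.1 < p.2 ∧ p.1 ∉ s.1 ∧ p.2 ∉ s.1 := by
  induction σ with
  | nil => intro s p h; cases h
  | cons b σ ih =>
      intro s p h
      cases σ with
      | nil =>
          rw [lab_singleton] at h
          cases b with
          | true => simp at h
          | false =>
              simp only [if_false, Bool.false_eq_true] at h
              exact E_eq_some h
      | cons c τ =>
          rw [lab_cons s b _ (by simp)] at h
          obtain ⟨h1, h2, h3⟩ := ih (step s b) p h
          exact ⟨h1, fun hx => h2 (step_fst_subset s b hx), fun hx => h3 (step_fst_subset s b hx)⟩

lemma label_disjoint {σ ρ : List Bool} {p q : ℕ × ℕ} (hρ : ρ ≠ [])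
    (h1 : lab init σ = some p) (h2 : lab init (σ ++ ρ) = some q) :
    q.1 ≠ p.1 ∧ q.1 ≠ p.2 ∧ q.2 ≠ p.1 ∧ q.2 ≠ p.2 := by
  rw [lab_append σ _ ρ hρ] at h2
  obtain ⟨hin1, hin2⟩ := lab_in σ init p h1
  obtain ⟨_, hf1, hf2⟩ := lab_fresh ρ (run init σ) q h2
  exact ⟨fun h => hf1 (h ▸ hin1), fun h => hf1 (h ▸ hin2),
         fun h => hf2 (h ▸ hin1), fun h => hf2 (h ▸ hin2)⟩


def half (p : ℚ × ℚ) (b : Bool) : ℚ × ℚ :=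
  if b then ((p.1 + p.2) / 2, p.2) else (p.1, (p.1 + p.2) / 2)

def iv : ℚ × ℚ → List Bool → ℚ × ℚ
  | p, [] => p
  | p, b :: σ => iv (half p b) σ

def cellOf (p : ℚ × ℚ) (σ : List Bool) : Set ℚ := Set.Ico (iv p σ).1 (iv p σ).2

def base (k : ℤ) : ℚ × ℚ := ((k : ℚ), (k : ℚ) + 1)

lemma base_lt (k : ℤ) : (base k).1 < (base k).2 := by
  simp [base]

lemma half_spec {p : ℚ × ℚ} (hp : p.1 < p.2) (b : Bool) :
    (half p b).1 < (half p b).2 ∧ p.1 ≤ (half p b).1 ∧ (half p b).2 ≤ p.2 := by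
  cases b <;> simp [half] <;> constructor <;> linarith

lemma iv_spec (σ : List Bool) : ∀ p : ℚ × ℚ, p.1 < p.2 →
    (iv p σ).1 < (iv p σ).2 ∧ p.1 ≤ (iv p σ).1 ∧ (iv p σ).2 ≤ p.2 := by
  induction σ with
  | nil => intro p hp; exact ⟨hp, le_rfl, le_rfl⟩
  | cons b σ ih =>
      intro p hp
      obtain ⟨h1, h2, h3⟩ := half_spec hp b
      obtain ⟨g1, g2, g3⟩ := ih (half p b) h1
      exact ⟨g1, h2.trans g2, g3.trans h3⟩

lemma iv_append (σ : List Bool) : ∀ (p : ℚ × ℚ) (τ : List Bool),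
    iv p (σ ++ τ) = iv (iv p σ) τ := by
  induction σ with
  | nil => intro p τ; rfl
  | cons b σ ih => intro p τ; exact ih (half p b) τ

lemma cell_append_subset {p : ℚ × ℚ} (hp : p.1 < p.2) (σ τ : List Bool) :
    cellOf p (σ ++ τ) ⊆ cellOf p σ := by
  unfold cellOf
  rw [iv_append]
  obtain ⟨h1, _, _⟩ := iv_spec σ p hp
  obtain ⟨g1, g2, g3⟩ := iv_spec τ (iv p σ) h1
  exact Set.Ico_subset_Ico g2 g3

lemma cell_subset_base {p : ℚ × ℚ} (hp : p.1 < p.2) (σ : List Bool) :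
    cellOf p σ ⊆ Set.Ico p.1 p.2 := by
  obtain ⟨h1, h2, h3⟩ := iv_spec σ p hp
  exact Set.Ico_subset_Ico h2 h3

lemma iv_width (σ : List Bool) : ∀ p : ℚ × ℚ,
    (iv p σ).2 - (iv p σ).1 = (p.2 - p.1) / 2 ^ σ.length := by
  induction σ with
  | nil => intro p; simp [iv]
  | cons b σ ih =>
      intro p
      rw [show iv p (b :: σ) = iv (half p b) σ from rfl, ih (half p b)]
      have h2 : (half p b).2 - (half p b).1 = (p.2 - p.1) / 2 := by
        cases b <;> simp only [half, if_true, if_false, Bool.false_eq_true] <;> ring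
      rw [h2, List.length_cons, pow_succ]
      rw [div_div]
      ring_nf

lemma mem_prefix (q : ℚ) : ∀ (σ τ : List Bool) (p : ℚ × ℚ), p.1 < p.2 →
    q ∈ cellOf p σ → q ∈ cellOf p τ → σ <+: τ ∨ τ <+: σ := by
  intro σ
  induction σ with
  | nil => intro τ p _ _ _; exact Or.inl (List.nil_prefix)
  | cons b σ ih =>
      intro τ p hp hq1 hq2
      cases τ with
      | nil => exact Or.inr (List.nil_prefix)
      | cons c τ' =>
          have hhb := half_spec hp b
          have hhc := half_spec hp c
          have m1 : q ∈ Set.Ico (half p b).1 (half p b).2 :=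
            cell_subset_base hhb.1 σ hq1
          have m2 : q ∈ Set.Ico (half p c).1 (half p c).2 :=
            cell_subset_base hhc.1 τ' hq2
          have hbc : b = c := by
            by_contra hne
            cases b <;> cases c <;> simp_all [half] <;>
              (obtain ⟨a1, a2⟩ := m1; obtain ⟨b1, b2⟩ := m2; linarith)
          subst hbc
          rcases ih τ' (half p b) hhb.1 hq1 hq2 with h | h
          · exact Or.inl (List.cons_prefix_cons.mpr ⟨rfl, h⟩)
          · exact Or.inr (List.cons_prefix_cons.mpr ⟨rfl, h⟩)

def follow : ℚ × ℚ → ℚ → ℕ → List Bool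
  | _, _, 0 => []
  | p, q, d+1 =>
      (if q < (p.1 + p.2) / 2 then false else true) ::
        follow (half p (if q < (p.1 + p.2) / 2 then false else true)) q d

lemma follow_mem : ∀ (d : ℕ) (p : ℚ × ℚ) (q : ℚ), p.1 < p.2 →
    q ∈ Set.Ico p.1 p.2 → q ∈ cellOf p (follow p q d) ∧ (follow p q d).length = d := by
  intro d
  induction d with
  | zero => intro p q hp hq; exact ⟨hq, rfl⟩
  | succ n ih =>
      intro p q hp hq
      set b : Bool := if q < (p.1 + p.2) / 2 then false else true with hb
      have hmem : q ∈ Set.Ico (half p b).1 (half p b).2 := by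
        by_cases hcase : q < (p.1 + p.2) / 2
        · have : b = false := by simp [hb, hcase]
          rw [this]
          exact ⟨hq.1, by simpa [half] using hcase⟩
        · have : b = true := by simp [hb, hcase]
          rw [this]
          refine ⟨by simpa [half] using not_lt.mp hcase, ?_⟩
          simpa [half] using hq.2
      obtain ⟨g1, g2⟩ := ih (half p b) q (half_spec hp b).1 hmem
      constructor
      · show q ∈ cellOf p (b :: follow (half p b) q n)
        exact g1
      · simp [follow, ← hb, g2]

lemma exists_deep_cell {l u : ℚ} (h : l < u) :
    ∃ (k : ℤ) (σ : List Bool), cellOf (base k) σ ⊆ Set.Ioo l u := by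
  set q : ℚ := (l + u) / 2 with hqdef
  obtain ⟨d, hd⟩ : ∃ d : ℕ, 2 / (u - l) < 2 ^ d := pow_unbounded_of_one_lt _ one_lt_two
  have hpow : (0:ℚ) < 2 ^ d := by positivity
  have hw : 1 / 2 ^ d < (u - l) / 2 := by
    rw [div_lt_div_iff₀ hpow (by norm_num)]
    have hul : (0:ℚ) < u - l := by linarith
    rw [div_lt_iff₀ hul] at hd
    linarith
  refine ⟨⌊q⌋, follow (base ⌊q⌋) q d, ?_⟩
  have hqmem : q ∈ Set.Ico (base ⌊q⌋).1 (base ⌊q⌋).2 := by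
    constructor
    · exact Int.floor_le q
    · show q < (⌊q⌋ : ℚ) + 1
      exact Int.lt_floor_add_one q
  obtain ⟨hmem, hlen⟩ := follow_mem d (base ⌊q⌋) q (base_lt _) hqmem
  set σ := follow (base ⌊q⌋) q d
  have hwidth : (iv (base ⌊q⌋) σ).2 - (iv (base ⌊q⌋) σ).1 = 1 / 2 ^ d := by
    rw [iv_width σ, hlen]
    simp [base]
  intro x hx
  obtain ⟨hx1, hx2⟩ := hx
  obtain ⟨hq1, hq2⟩ := hmem
  have hql : q - l = (u - l) / 2 := by rw [hqdef]; ring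
  have hqu : u - q = (u - l) / 2 := by rw [hqdef]; ring
  constructor
  · -- l < x
    have : (iv (base ⌊q⌋) σ).1 > q - 1 / 2 ^ d := by linarith
    linarith
  · -- x < u
    have : (iv (base ⌊q⌋) σ).2 ≤ q + 1 / 2 ^ d := by linarith
    linarith

lemma exists_label_ext (σ₀ : List Bool) {s t : ℕ} (hst : s < t)
    (hs : s ∉ (run init σ₀).1) (ht : t ∉ (run init σ₀).1) :
    ∃ ρ : List Bool, ρ ≠ [] ∧ lab init (σ₀ ++ ρ) = some (s, t) := by
  set W := (run init σ₀).1 with hW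
  set j := (run init σ₀).2 with hj
  have hjle : j ≤ Nat.pair s (Nat.pair t j) :=
    le_trans (Nat.right_le_pair t j) (Nat.right_le_pair s _)
  set m := Nat.pair s (Nat.pair t j) - j with hm
  have hjm : j + m = Nat.pair s (Nat.pair t j) := by omega
  have hE : E W (j + m) = some (s, t) := by
    rw [hjm]
    unfold E
    rw [if_pos]
    · simp [Nat.unpair_pair]
    · simp only [Nat.unpair_pair]
      exact ⟨hst, hs, ht⟩
  have main : ∀ (n : ℕ) (st : StT),
      lab st (List.replicate n true ++ [false]) = E st.1 (st.2 + n) := by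
    intro n
    induction n with
    | zero => intro st; simp [lab]
    | succ n ih =>
        intro st
        have hrep : List.replicate (n+1) true ++ [false]
            = true :: (List.replicate n true ++ [false]) := by
          simp [List.replicate_succ]
        rw [hrep, lab_cons _ _ _ (by simp), ih (step st true)]
        have : step st true = (st.1, st.2 + 1) := rfl
        rw [this]
        congr 1
        omega
  refine ⟨List.replicate m true ++ [false], by simp, ?_⟩
  rw [lab_append σ₀ init _ (by simp), main m (run init σ₀)]
  exact hE

section WithF

variable (f : ℕ → ℚ)

def Tag (v s t : ℕ) : Prop :=
  s < t ∧ t < v ∧ ∃ (k : ℤ) (σ : List Bool),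
    f v ∈ cellOf (base k) σ ∧ lab init σ = some (s, t)

lemma tag_unique {v s t s' t' a : ℕ} (h : Tag f v s t) (h' : Tag f v s' t')
    (ha : a = s ∨ a = t) (ha' : a = s' ∨ a = t') : s = s' ∧ t = t' := by
  obtain ⟨hst, hv, k, σ, hmem, hlab⟩ := h
  obtain ⟨hst', hv', k', σ', hmem', hlab'⟩ := h'
  have hfloor : ∀ (k₀ : ℤ) (σ₀ : List Bool), f v ∈ cellOf (base k₀) σ₀ → k₀ = ⌊f v⌋ := by
    intro k₀ σ₀ hm
    have := cell_subset_base (base_lt k₀) σ₀ hm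
    obtain ⟨hb1, hb2⟩ := this
    symm
    rw [Int.floor_eq_iff]
    exact ⟨hb1, by push_cast; exact hb2⟩
  have hk : k = k' := by rw [hfloor k σ hmem, hfloor k' σ' hmem']
  subst hk
  have hcomp := mem_prefix (f v) σ σ' (base k) (base_lt k) hmem hmem'
  have key : ∀ (σ₁ σ₂ : List Bool) (p q : ℕ × ℕ), σ₁ <+: σ₂ →
      lab init σ₁ = some p → lab init σ₂ = some q →
      (a = p.1 ∨ a = p.2) → (a = q.1 ∨ a = q.2) → p = q := by
    intro σ₁ σ₂ p q hpre hl1 hl2 hap haq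
    obtain ⟨ρ, rfl⟩ := hpre
    rcases eq_or_ne ρ [] with rfl | hρ
    · rw [List.append_nil] at hl2
      rw [hl1] at hl2
      exact (Option.some_injective _ hl2).symm ▸ rfl
    · obtain ⟨d1, d2, d3, d4⟩ := label_disjoint hρ hl1 hl2
      exfalso
      rcases hap with rfl | rfl <;> rcases haq with h | h <;> simp_all
  rcases hcomp with hpre | hpre
  · have := key σ σ' (s, t) (s', t') hpre hlab hlab' ha ha'
    exact ⟨congrArg Prod.fst this, congrArg Prod.snd this⟩
  · have := key σ' σ (s', t') (s, t) hpre hlab' hlab ha' ha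
    exact ⟨(congrArg Prod.fst this).symm, (congrArg Prod.snd this).symm⟩

open Classical in
noncomputable def chi (a b : ℕ) : ℕ :=
  if h : ∃ st : ℕ × ℕ, Tag f b st.1 st.2 ∧ (a = st.1 ∨ a = st.2) then
    Nat.pair 0 (Nat.pair b (Nat.pair h.choose.1 h.choose.2))
  else Nat.pair 1 (Nat.pair b a)

lemma chi_eq_of_tag {v s t a : ℕ} (h : Tag f v s t) (ha : a = s ∨ a = t) :
    chi f a v = Nat.pair 0 (Nat.pair v (Nat.pair s t)) := by
  have hex : ∃ st : ℕ × ℕ, Tag f v st.1 st.2 ∧ (a = st.1 ∨ a = st.2) := ⟨(s, t), h, ha⟩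
  rw [chi, dif_pos hex]
  obtain ⟨h1, h2⟩ := hex.choose_spec
  obtain ⟨e1, e2⟩ := tag_unique f h1 h h2 ha
  rw [e1, e2]

lemma chi_twoBounded : TwoBounded (chi f) := by
  intro c
  by_cases h0 : c.unpair.1 = 0
  · set v := c.unpair.2.unpair.1 with hv
    set s₀ := c.unpair.2.unpair.2.unpair.1 with hs₀
    set t₀ := c.unpair.2.unpair.2.unpair.2 with ht₀
    have hsub : {p : ℕ × ℕ | p.1 < p.2 ∧ chi f p.1 p.2 = c} ⊆ {(s₀, v), (t₀, v)} := by
      rintro ⟨x, y⟩ ⟨hlt, hchi⟩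
      rw [chi] at hchi
      split at hchi
      · rename_i hex
        obtain ⟨htag, hor⟩ := hex.choose_spec
        have hun := congrArg Nat.unpair hchi
        rw [Nat.unpair_pair] at hun
        have hc2 : Nat.pair y (Nat.pair hex.choose.1 hex.choose.2) = c.unpair.2 := by
          have := congrArg Prod.snd hun
          simpa using this
        have hun2 := congrArg Nat.unpair hc2
        rw [Nat.unpair_pair] at hun2
        have hy : y = v := by rw [hv, ← hun2]
        have hc3 : Nat.pair hex.choose.1 hex.choose.2 = c.unpair.2.unpair.2 := by
          have := congrArg Prod.snd hun2
          simpa using this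
        have hun3 := congrArg Nat.unpair hc3
        rw [Nat.unpair_pair] at hun3
        have hxs : hex.choose.1 = s₀ := by rw [hs₀, ← hun3]
        have hxt : hex.choose.2 = t₀ := by rw [ht₀, ← hun3]
        rcases hor with h | h
        · left; rw [Prod.mk.injEq]; exact ⟨h.trans hxs, hy⟩
        · right
          simp only [Set.mem_singleton_iff, Prod.mk.injEq]
          exact ⟨h.trans hxt, hy⟩
      · exfalso
        have hun := congrArg Nat.unpair hchi
        rw [Nat.unpair_pair] at hun
        have : (1 : ℕ) = c.unpair.1 := by
          have := congrArg Prod.fst hun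
          simpa using this
        omega
    calc ({p : ℕ × ℕ | p.1 < p.2 ∧ chi f p.1 p.2 = c}).encard
        ≤ ({(s₀, v), (t₀, v)} : Set (ℕ × ℕ)).encard := Set.encard_mono hsub
      _ ≤ 2 := by
          refine le_trans (Set.encard_insert_le _ _) ?_
          rw [Set.encard_singleton]
          exact le_of_eq one_add_one_eq_two
  · by_cases h1 : c.unpair.1 = 1
    · have hsub : {p : ℕ × ℕ | p.1 < p.2 ∧ chi f p.1 p.2 = c}
          ⊆ {(c.unpair.2.unpair.2, c.unpair.2.unpair.1)} := by
        rintro ⟨x, y⟩ ⟨hlt, hchi⟩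
        rw [chi] at hchi
        split at hchi
        · exfalso
          have hun := congrArg Nat.unpair hchi
          rw [Nat.unpair_pair] at hun
          have : (0 : ℕ) = c.unpair.1 := by
            have := congrArg Prod.fst hun
            simpa using this
          omega
        · have hun := congrArg Nat.unpair hchi
          rw [Nat.unpair_pair] at hun
          have hc2 : Nat.pair y x = c.unpair.2 := by
            have := congrArg Prod.snd hun
            simpa using this
          have hun2 := congrArg Nat.unpair hc2
          rw [Nat.unpair_pair] at hun2
          have hy : y = c.unpair.2.unpair.1 := by rw [← hun2]
          have hx : x = c.unpair.2.unpair.2 := by rw [← hun2]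
          simp [Set.mem_singleton_iff, Prod.mk.injEq]
          exact ⟨hx, hy⟩
      calc ({p : ℕ × ℕ | p.1 < p.2 ∧ chi f p.1 p.2 = c}).encard
          ≤ ({(c.unpair.2.unpair.2, c.unpair.2.unpair.1)} : Set (ℕ × ℕ)).encard :=
            Set.encard_mono hsub
        _ = 1 := Set.encard_singleton _
        _ ≤ 2 := by norm_num
    · have hsub : {p : ℕ × ℕ | p.1 < p.2 ∧ chi f p.1 p.2 = c} ⊆ (∅ : Set (ℕ × ℕ)) := by
        rintro ⟨x, y⟩ ⟨hlt, hchi⟩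
        rw [chi] at hchi
        split at hchi <;>
        · have hun := congrArg Nat.unpair hchi
          rw [Nat.unpair_pair] at hun
          have := congrArg Prod.fst hun
          simp at this
          omega
      have := Set.encard_mono hsub
      rw [Set.encard_empty] at this
      exact le_trans this (by norm_num)

end WithF

lemma avoid_finite {F : Set ℚ} (hF : F.Finite) :
    ∀ a b : ℚ, a < b → ∃ a' b' : ℚ, a' < b' ∧ Set.Ioo a' b' ⊆ Set.Ioo a b ∧
      ∀ z ∈ Set.Ioo a' b', z ∉ F := by
  refine Set.Finite.induction_on
    (motive := fun F _ => ∀ a b : ℚ, a < b → ∃ a' b' : ℚ, a' < b' ∧ Set.Ioo a' b' ⊆ Set.Ioo a b ∧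
      ∀ z ∈ Set.Ioo a' b', z ∉ F) F hF ?_ ?_
  · intro a b hab
    exact ⟨a, b, hab, subset_rfl, by simp⟩
  · intro x F' hx hFin ih a b hab
    obtain ⟨a', b', h1, h2, h3⟩ := ih a b hab
    by_cases hxm : x ∈ Set.Ioo a' b'
    · refine ⟨a', x, hxm.1, ?_, ?_⟩
      · intro z hz
        exact h2 ⟨hz.1, hz.2.trans hxm.2⟩
      · intro z hz hmem
        rcases Set.mem_insert_iff.mp hmem with rfl | hmem'
        · exact absurd hz.2 (lt_irrefl z)
        · exact h3 z ⟨hz.1, hz.2.trans hxm.2⟩ hmem'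
    · refine ⟨a', b', h1, h2, ?_⟩
      intro z hz hmem
      rcases Set.mem_insert_iff.mp hmem with rfl | hmem'
      · exact hxm hz
      · exact h3 z hz hmem'

end RNwd

/-- Every rainbow Ramsey ultrafilter is nowhere dense. -/
theorem rainbowRamsey_nowhereDense (U : Ultrafilter ℕ)
    (hU : ∀ s : Set ℕ, s.Finite → s ∉ U)
    (hRR : ∀ χ : ℕ → ℕ → ℕ, TwoBounded χ → ∃ A ∈ U, Polychromatic χ A) :
    ∀ f : ℕ → ℚ, ∃ A ∈ U, IsNowhereDense (f '' A) := by
  intro f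
  obtain ⟨A, hAU, hpoly⟩ := hRR (RNwd.chi f) (RNwd.chi_twoBounded f)
  refine ⟨A, hAU, ?_⟩
  have hAinf : A.Infinite := by
    by_contra h
    rw [Set.not_infinite] at h
    exact hU A h hAU
  -- key killing lemma
  have key : ∀ l u : ℚ, l < u → ∃ l' u' : ℚ, l' < u' ∧ Set.Ioo l' u' ⊆ Set.Ioo l u ∧
      ∀ z ∈ Set.Ioo l' u', z ∉ f '' A := by
    intro l u hlu
    obtain ⟨k, σ₀, hdeep⟩ := RNwd.exists_deep_cell hlu
    set W := (RNwd.run RNwd.init σ₀).1 with hWdef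
    have hAW : (A \ ↑W).Infinite := hAinf.diff W.finite_toSet
    obtain ⟨s', hs'⟩ := hAW.nonempty
    obtain ⟨t', ht'⟩ := (hAW.diff (Set.finite_singleton s')).nonempty
    have hne : s' ≠ t' := by
      intro h
      exact ht'.2 (by simp [h])
    have ht'' : t' ∈ A \ ↑W := ht'.1
    -- order them
    obtain ⟨s, t, hst, hsA, htA, hsW, htW⟩ :
        ∃ s t : ℕ, s < t ∧ s ∈ A ∧ t ∈ A ∧ s ∉ W ∧ t ∉ W := by
      rcases lt_or_gt_of_ne hne with h | h
      · exact ⟨s', t', h, hs'.1, ht''.1, hs'.2, ht''.2⟩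
      · exact ⟨t', s', h, ht''.1, hs'.1, ht''.2, hs'.2⟩
    obtain ⟨ρ, hρne, hρ⟩ := RNwd.exists_label_ext σ₀ hst hsW htW
    -- the extended cell
    set τ := σ₀ ++ ρ with hτ
    have hcellsub : RNwd.cellOf (RNwd.base k) τ ⊆ Set.Ioo l u :=
      (RNwd.cell_append_subset (RNwd.base_lt k) σ₀ ρ).trans hdeep
    -- trace lemma
    have htr : ∀ v ∈ A, t < v → f v ∉ RNwd.cellOf (RNwd.base k) τ := by
      intro v hvA hvt hmem
      have htag : RNwd.Tag f v s t := ⟨hst, hvt, k, τ, hmem, hρ⟩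
      have h1 := RNwd.chi_eq_of_tag f htag (Or.inl rfl)
      have h2 := RNwd.chi_eq_of_tag f htag (Or.inr rfl)
      have h3 := hpoly s v t v hsA hvA htA hvA (hst.trans hvt) hvt (h1.trans h2.symm)
      exact absurd h3.1 hst.ne
    -- open interval inside the cell
    set a := (RNwd.iv (RNwd.base k) τ).1 with hadef
    set b := (RNwd.iv (RNwd.base k) τ).2 with hbdef
    have hab : a < b := (RNwd.iv_spec τ (RNwd.base k) (RNwd.base_lt k)).1
    have hIoo : Set.Ioo a b ⊆ RNwd.cellOf (RNwd.base k) τ := Set.Ioo_subset_Ico_self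
    -- finite image to avoid
    have hF : (f '' (Set.Iic t)).Finite := (Set.finite_Iic t).image f
    obtain ⟨l', u', h1', h2', h3'⟩ := RNwd.avoid_finite hF a b hab
    refine ⟨l', u', h1', ?_, ?_⟩
    · exact h2'.trans (hIoo.trans hcellsub)
    · rintro z hz ⟨v, hvA, rfl⟩
      by_cases hvt : t < v
      · exact htr v hvA hvt (hIoo (h2' hz))
      · exact h3' _ hz ⟨v, not_lt.mp hvt, rfl⟩
  -- conclude nowhere dense
  rw [IsNowhereDense, Set.eq_empty_iff_forall_notMem]
  intro q hq
  have h1 : closure (f '' A) ∈ nhds q := mem_interior_iff_mem_nhds.mp hq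
  obtain ⟨l, u, hqm, hsub⟩ := mem_nhds_iff_exists_Ioo_subset.mp h1
  obtain ⟨l', u', hlu', hsub', hdisj⟩ := key l u (hqm.1.trans hqm.2)
  set z := (l' + u') / 2 with hz
  have hzm : z ∈ Set.Ioo l' u' := ⟨by rw [hz]; linarith, by rw [hz]; linarith⟩
  have hzc : z ∈ closure (f '' A) := hsub (hsub' hzm)
  rw [mem_closure_iff] at hzc
  obtain ⟨y, hy1, hy2⟩ := hzc (Set.Ioo l' u') isOpen_Ioo hzm
  exact hdisj y hy1 hy2
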